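/- arXiv:1607.07073 — 5 statements merged into one kernel-verified Lean document; each statement's English description precedes it below -/
import Mathlib

section
/- Let G be a strongly connected digraph with a fixed start vertex s, and let S ⊆ V with s ∉ S be a set of vertices such that the induced subgraph G[S] is strongly connected. Then there exists a vertex t such that every vertex w ∈ S having no proper dominator belonging to S satisfies d(w) = t; in other words, S consists of a set of siblings in the dominator tree D of G_s together with some of their descendants in D. -/
/-!  Basic notions for finite directed graphs given by an edge set `E : Set (V × V)`. -/

variable {V : Type*}

/-- A path from `u` to `v`: a nonempty list of vertices starting at `u`, ending at `v`,
in which every pair of consecutive vertices is an edge. -/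
def IsPath (E : Set (V × V)) (u v : V) (p : List V) : Prop :=
  p.Chain' (fun a b => (a, b) ∈ E) ∧ p.head? = some u ∧ p.getLast? = some v

/-- `v` is reachable from `u` by a path. -/
def Reach (E : Set (V × V)) (u v : V) : Prop := ∃ p, IsPath E u v p

/-- Every vertex reaches every other vertex. -/
def StronglyConnected (E : Set (V × V)) : Prop := ∀ u v, Reach E u v

/-- An edge `e` is a strong bridge if its removal destroys strong connectivity. -/
def StrongBridge (E : Set (V × V)) (e : V × V) : Prop :=
  e ∈ E ∧ ¬ StronglyConnected (E \ {e})

/-- `u` dominates `v` in the flow graph with start vertex `s`: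
every path from `s` to `v` contains `u`. -/
def Dominates (E : Set (V × V)) (s u v : V) : Prop :=
  ∀ p, IsPath E s v p → u ∈ p

/-- An edge `e = (e.1, e.2)` is a bridge of the flow graph `G_s`:
every path from `s` to `e.2` contains the edge `e`. -/
def FlowBridge (E : Set (V × V)) (s : V) (e : V × V) : Prop :=
  e ∈ E ∧ ∀ p, IsPath E s e.2 p → [e.1, e.2] <:+: p

/-- The reverse digraph: all edges reversed. -/
def rev (E : Set (V × V)) : Set (V × V) := {e | (e.2, e.1) ∈ E}

/-- `D(v)`: the set of vertices dominated by `v` in `G_s`. -/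
def Dset (E : Set (V × V)) (s v : V) : Set V := {w | Dominates E s v w}

/-- Reachability inside the induced subgraph `G[S]`: a path all of whose vertices lie in `S`. -/
def ReachableIn (E : Set (V × V)) (S : Set V) (u v : V) : Prop :=
  ∃ p, IsPath E u v p ∧ ∀ w ∈ p, w ∈ S

/-- `C` is a strongly connected component of the induced subgraph `G[S]`. -/
def SCCIn (E : Set (V × V)) (S : Set V) (C : Set V) : Prop :=
  C.Nonempty ∧ C ⊆ S ∧
  (∀ u ∈ C, ∀ v ∈ C, ReachableIn E S u v) ∧
  (∀ v ∈ S, ∀ u ∈ C, ReachableIn E S u v → ReachableIn E S v u → v ∈ C)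

/-- A bridge-dominated component: an SCC of `G[D(v)]` for some bridge `(u,v)` of `G_s`. -/
def BridgeDomComponent (E : Set (V × V)) (s : V) (C : Set V) : Prop :=
  ∃ u v, FlowBridge E s (u, v) ∧ SCCIn E (Dset E s v) C

/-- The set of edges used by a path `p`. -/
def pathEdges (p : List V) : Set (V × V) := {e | [e.1, e.2] <:+: p}

/-- `u` and `v` are `2`-edge-connected: there are two edge-disjoint paths from `u` to `v`
and two edge-disjoint paths from `v` to `u`. -/
def TwoEdgeConnected (E : Set (V × V)) (u v : V) : Prop :=
  (∃ p q, IsPath E u v p ∧ IsPath E u v q ∧ pathEdges p ∩ pathEdges q = ∅) ∧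
  (∃ p q, IsPath E v u p ∧ IsPath E v u q ∧ pathEdges p ∩ pathEdges q = ∅)

/-- `u` is the immediate dominator of `v` in `G_s`: a proper dominator of `v`
dominated by every proper dominator of `v`. -/
def ImmDom (E : Set (V × V)) (s u v : V) : Prop :=
  Dominates E s u v ∧ u ≠ v ∧
  ∀ w, Dominates E s w v → w ≠ v → Dominates E s w u

/-- `depth v = |Dom(v)|`, the number of dominators of `v` in `G_s`. -/
noncomputable def depth (E : Set (V × V)) (s v : V) : ℕ :=
  {u | Dominates E s u v}.ncard

/-- `z` is the nearest common ancestor of `x` and `y` in the dominator tree of `G_s`: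
a common dominator of `x` and `y` dominated by every common dominator. -/
def IsNCA (E : Set (V × V)) (s x y z : V) : Prop :=
  Dominates E s z x ∧ Dominates E s z y ∧
  ∀ w, Dominates E s w x → Dominates E s w y → Dominates E s w z

/-- `r` is the bridge-decomposition root of `v` in `G_s`: the deepest dominator `r`
of `v` such that `r = s` or `(d(r), r)` is a bridge of `G_s`. -/
def IsBDRoot (E : Set (V × V)) (s v r : V) : Prop :=
  Dominates E s r v ∧
  (r = s ∨ ∃ u, ImmDom E s u r ∧ FlowBridge E s (u, r)) ∧
  ∀ r', Dominates E s r' v →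
    (r' = s ∨ ∃ u', ImmDom E s u' r' ∧ FlowBridge E s (u', r')) →
    Dominates E s r' r

section Aux
variable {V : Type*} {E : Set (V × V)}

lemma IsPath.ne_nil {u v : V} {p : List V} (h : IsPath E u v p) : p ≠ [] := by
  rintro rfl; simpa using h.2.1

lemma IsPath.start_mem {u v : V} {p : List V} (h : IsPath E u v p) : u ∈ p := by
  have h2 := h.2.1
  cases p with
  | nil => simp at h2
  | cons a l =>
    simp only [List.head?_cons, Option.some.injEq] at h2
    exact h2 ▸ List.mem_cons_self

lemma IsPath.drop {u v : V} {p : List V} (h : IsPath E u v p) (i : ℕ) (hi : i < p.length) :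
    IsPath E p[i] v (p.drop i) := by
  have hne : p.drop i ≠ [] := by
    simp only [ne_eq, List.drop_eq_nil_iff, not_le]; exact hi
  refine ⟨h.1.drop i, ?_, ?_⟩
  · simp [List.head?_drop, List.getElem?_eq_getElem hi]
  · have h2 : (p.take i ++ p.drop i).getLast? = p.getLast? := by rw [List.take_append_drop]
    rw [List.getLast?_append] at h2
    cases hgl : (p.drop i).getLast? with
    | none => exact absurd (List.getLast?_eq_none_iff.1 hgl) hne
    | some x =>
      rw [hgl] at h2
      simp only [Option.some_or] at h2
      rw [h2, h.2.2]

lemma IsPath.concat {a b c : V} {q r : List V} (hq : IsPath E a b q) (hr : IsPath E b c r) :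
    IsPath E a c (q ++ r.tail) := by
  obtain ⟨hc, hh, hl⟩ := hr
  cases r with
  | nil => simp at hh
  | cons x r' =>
    simp only [List.head?_cons, Option.some.injEq] at hh
    subst hh
    cases r' with
    | nil =>
      simp only [List.getLast?_singleton, Option.some.injEq] at hl
      subst hl
      simpa using hq
    | cons y r'' =>
      refine ⟨?_, ?_, ?_⟩
      · show List.IsChain _ _; rw [List.isChain_append]
        refine ⟨hq.1, List.IsChain.tail hc, ?_⟩
        intro z hz w hw
        rw [hq.2.2, Option.mem_some_iff] at hz
        simp only [List.tail_cons, List.head?_cons, Option.mem_some_iff] at hw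
        subst hz; subst hw
        exact (List.isChain_cons_cons.1 hc).1
      · cases q with
        | nil => exact absurd rfl hq.ne_nil
        | cons a' q' => simpa using hq.2.1
      · simp only [List.tail_cons, List.getLast?_append]
        rw [← List.getLast?_cons_cons (a := x), hl]
        simp

end Aux

/-- if `G[S]` is strongly connected and `s ∉ S`, then there is a vertex
`t` such that every `w ∈ S` with no proper dominator in `S` has immediate dominator `t`;
i.e. `S` consists of a set of siblings in the dominator tree plus some descendants. -/
theorem stmt11 {V : Type*} (E : Set (V × V)) (s : V) (S : Set V)
    (hSC : StronglyConnected E) (hs : s ∉ S)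
    (hS : ∀ u ∈ S, ∀ v ∈ S, ReachableIn E S u v) :
    ∃ t, ∀ w ∈ S, (∀ u ∈ S, Dominates E s u w → u = w) → ImmDom E s t w := by
  classical
  by_cases H : ∃ w₀ ∈ S, ∀ u ∈ S, Dominates E s u w₀ → u = w₀
  case neg =>
    exact ⟨s, fun w hw hmin => absurd ⟨w, hw, hmin⟩ H⟩
  obtain ⟨w₀, hw₀S, hmin₀⟩ := H
  have hsw₀ : s ≠ w₀ := fun h => hs (h ▸ hw₀S)
  obtain ⟨p, hp⟩ := hSC s w₀
  have hplen : 0 < p.length := List.length_pos_iff.2 hp.ne_nil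
  set P : ℕ → Prop := fun j => ∃ h : j < p.length, Dominates E s p[j] w₀ ∧ p[j] ≠ w₀ with hPdef
  have hp0 : p[0] = s := by
    cases p with
    | nil => simp at hplen
    | cons a l =>
      have := hp.2.1
      simp only [List.head?_cons, Option.some.injEq] at this
      simpa using this
  have hP0 : P 0 := ⟨hplen, by rw [hp0]; exact ⟨fun q hq => hq.start_mem, hsw₀⟩⟩
  set i := Nat.findGreatest P p.length with hidef
  obtain ⟨hi, hdom, hne⟩ : P i := Nat.findGreatest_spec (Nat.zero_le _) hP0
  set t := p[i] with htdef
  -- every proper dominator of w₀ dominates t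
  have key : ∀ u, Dominates E s u w₀ → u ≠ w₀ → Dominates E s u t := by
    intro u hu hune q hq
    by_contra huq
    have hdropPath : IsPath E t w₀ (p.drop i) := hp.drop i hi
    have hcat : IsPath E s w₀ (q ++ (p.drop i).tail) := hq.concat hdropPath
    rcases List.mem_append.1 (hu _ hcat) with h1 | h2
    · exact huq h1
    · rw [List.tail_drop] at h2
      obtain ⟨m, hm, hmu⟩ := List.getElem_of_mem h2
      rw [List.getElem_drop] at hmu
      have hlt : i + 1 + m < p.length := by
        simp only [List.length_drop] at hm; omega
      have hPk : P (i + 1 + m) := ⟨hlt, by rw [hmu]; exact hu, by rw [hmu]; exact hune⟩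
      have := Nat.le_findGreatest (Nat.le_of_lt hlt) hPk
      omega
  have htS : t ∉ S := fun h => hne (hmin₀ t h hdom)
  -- a dominator of a member of S that is not in S dominates every member of S
  have transfer : ∀ u, u ∉ S → ∀ w ∈ S, Dominates E s u w → ∀ w' ∈ S, Dominates E s u w' := by
    intro u huS w hw hu w' hw' q hq
    by_contra huq
    obtain ⟨r, hr, hrS⟩ := hS w' hw' w hw
    rcases List.mem_append.1 (hu _ (hq.concat hr)) with h1 | h2
    · exact huq h1
    · exact huS (hrS u (List.mem_of_mem_tail h2))
  refine ⟨t, fun w hwS hminw => ⟨?_, ?_, ?_⟩⟩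
  · exact transfer t htS w₀ hw₀S hdom w hwS
  · exact fun h => htS (h ▸ hwS)
  · intro u hu hune
    have huS : u ∉ S := fun h => hune (hminw u h hu)
    have hu0 : Dominates E s u w₀ := transfer u huS w hwS hu w₀ hw₀S
    exact key u hu0 (fun h => huS (h ▸ hw₀S))
end

section
/- Let G be a strongly connected digraph with a fixed start vertex s, let (p,q) be a bridge of the flow graph G_s, and let r be a vertex dominating p. Let v be a vertex dominated by q, and let w be a vertex dominated by r but not dominated by q. If v and w are strongly connected in the induced subgraph G[D(r)], then v and p are strongly connected in G[D(r)]. -/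
/-!  Basic notions for finite directed graphs given by an edge set `E : Set (V × V)`. -/

variable {V : Type*}

section AuxForStmt12

variable {V : Type*}

lemma isPath_append' {E : Set (V × V)} {u v x : V} {p1 p2 : List V}
    (h1 : IsPath E u v p1) (h2 : IsPath E v x p2) : IsPath E u x (p1 ++ p2.tail) := by
  obtain ⟨c1, hh1, hl1⟩ := h1
  obtain ⟨c2, hh2, hl2⟩ := h2
  match p2, hh2 with
  | a :: t, hh2 =>
    simp only [List.head?_cons, Option.some.injEq] at hh2
    subst hh2
    match t, hl2 with
    | [], hl2 =>
      simp only [List.getLast?_singleton, Option.some.injEq] at hl2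
      subst hl2
      exact ⟨by simpa using c1, by simpa using hh1, by simpa using hl1⟩
    | b :: t', hl2 =>
      refine ⟨?_, ?_, ?_⟩
      · refine c1.append ((List.isChain_cons_cons.mp c2).2) ?_
        intro y hy z hz
        rw [hl1] at hy
        simp only [Option.mem_def, Option.some.injEq] at hy
        simp only [List.tail_cons, List.head?_cons, Option.mem_def, Option.some.injEq] at hz
        subst hy; subst hz
        exact (List.isChain_cons_cons.mp c2).1
      · rw [List.head?_append, hh1]; rfl
      · rw [List.tail_cons, List.getLast?_append_of_ne_nil _ (by simp)]
        rw [List.getLast?_cons_cons] at hl2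
        exact hl2

lemma isPath_split' {E : Set (V × V)} {u v a : V} {l1 l2 : List V}
    (h : IsPath E u v (l1 ++ a :: l2)) :
    IsPath E u a (l1 ++ [a]) ∧ IsPath E a v (a :: l2) := by
  obtain ⟨c, hh, hl⟩ := h
  constructor
  · refine ⟨c.prefix ⟨l2, by simp⟩, ?_, List.getLast?_concat⟩
    rw [List.head?_append] at hh ⊢
    simpa using hh
  · refine ⟨c.suffix ⟨l1, rfl⟩, rfl, ?_⟩
    rw [List.getLast?_append_cons] at hl
    exact hl

lemma reachableIn_trans' {E : Set (V × V)} {S : Set V} {u v x : V}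
    (h1 : ReachableIn E S u v) (h2 : ReachableIn E S v x) : ReachableIn E S u x := by
  obtain ⟨p1, hp1, hs1⟩ := h1
  obtain ⟨p2, hp2, hs2⟩ := h2
  refine ⟨p1 ++ p2.tail, isPath_append' hp1 hp2, fun y hy => ?_⟩
  rcases List.mem_append.mp hy with h | h
  · exact hs1 y h
  · exact hs2 y (List.mem_of_mem_tail h)

lemma exists_first_split' {a : V} : ∀ {l : List V}, a ∈ l →
    ∃ l1 l2, l = l1 ++ a :: l2 ∧ a ∉ l1 := by
  intro l
  induction l with
  | nil => intro h; cases h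
  | cons b t ih =>
    intro h
    by_cases hb : a = b
    · exact ⟨[], t, by rw [hb]; rfl, by simp⟩
    · have ht : a ∈ t := by
        rcases List.mem_cons.mp h with h1 | h1
        · exact absurd h1 hb
        · exact h1
      obtain ⟨l1, l2, rfl, h2⟩ := ih ht
      exact ⟨b :: l1, l2, rfl, by simp [hb, h2]⟩

lemma split_concat' {q : V} (R1 : List V) : ∀ (A B : List V), q ∉ R1 →
    A ++ q :: B = R1 ++ [q] → A = R1 ∧ B = [] := by
  induction R1 with
  | nil =>
    intro A B _ h
    cases A with
    | nil => simp_all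
    | cons a A' =>
      simp only [List.cons_append, List.nil_append] at h
      obtain ⟨rfl, h2⟩ := List.cons_eq_cons.mp h
      exact absurd h2 (by simp)
  | cons r1 R1' ih =>
    intro A B hq h
    cases A with
    | nil =>
      simp only [List.nil_append, List.cons_append] at h
      obtain ⟨rfl, -⟩ := List.cons_eq_cons.mp h
      exact absurd (List.mem_cons_self) hq
    | cons a A' =>
      simp only [List.cons_append] at h
      obtain ⟨rfl, h2⟩ := List.cons_eq_cons.mp h
      obtain ⟨h3, h4⟩ := ih A' B (fun hm => hq (List.mem_cons_of_mem _ hm)) h2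
      exact ⟨by rw [h3], h4⟩

end AuxForStmt12

/-- for a bridge `(p,q)` of `G_s`, `r` dominating `p`, `v` dominated by
`q`, and `w` dominated by `r` but not by `q`: if `v` and `w` are strongly connected in
`G[D(r)]` then `v` and `p` are strongly connected in `G[D(r)]`. -/
theorem stmt12 {V : Type*} (E : Set (V × V)) (s p q r v w : V)
    (hSC : StronglyConnected E)
    (hbr : FlowBridge E s (p, q)) (hr : Dominates E s r p)
    (hv : Dominates E s q v) (hw : Dominates E s r w) (hwq : ¬ Dominates E s q w)
    (h1 : ReachableIn E (Dset E s r) v w) (h2 : ReachableIn E (Dset E s r) w v) :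
    ReachableIn E (Dset E s r) v p ∧ ReachableIn E (Dset E s r) p v := by
  classical
  obtain ⟨P2, hP2, hP2S⟩ := h2
  rw [Dominates] at hwq; push_neg at hwq
  obtain ⟨Q, hQ, hqQ⟩ := hwq
  have hR : IsPath E s v (Q ++ P2.tail) := isPath_append' hQ hP2
  have hqR : q ∈ Q ++ P2.tail := hv _ hR
  obtain ⟨R1, R2, hRe, hqR1⟩ := exists_first_split' hqR
  have hRsplit := isPath_split' (l1 := R1) (l2 := R2) (hRe ▸ hR)
  obtain ⟨t1, t2, ht⟩ := hbr.2 _ hRsplit.1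
  have ht' : (t1 ++ [p]) ++ q :: t2 = R1 ++ [q] := by rw [← ht]; simp
  obtain ⟨hR1eq, ht2⟩ := split_concat' R1 _ _ hqR1 ht'
  have hpre1 : Q <+: Q ++ P2.tail := ⟨P2.tail, rfl⟩
  have hpre2 : t1 ++ [p] <+: Q ++ P2.tail := ⟨q :: R2, by rw [hR1eq]; exact hRe.symm⟩
  have hwP2 : w ∈ P2 := List.mem_of_mem_head? (by rw [hP2.2.1]; rfl)
  have hQw : Q.getLast? = some w := hQ.2.2
  have hpP2 : p ∈ P2 := by
    rcases List.prefix_or_prefix_of_prefix hpre1 hpre2 with ⟨Y, hY⟩ | ⟨X, hX⟩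
    · cases Y with
      | nil =>
        have hQeq : Q = t1 ++ [p] := by simpa using hY
        have : (p : V) = w := by
          rw [hQeq, List.getLast?_concat] at hQw
          exact (Option.some.injEq _ _).mp hQw
        rw [this]; exact hwP2
      | cons y Y' =>
        have hpY : p ∈ y :: Y' := by
          have : (Q ++ y :: Y').getLast? = some p := by
            rw [hY, List.getLast?_concat]
          rw [List.getLast?_append_of_ne_nil _ (by simp)] at this
          obtain ⟨hne, heq⟩ := List.mem_getLast?_eq_getLast (by rw [this]; rfl)
          rw [heq]; exact List.getLast_mem hne
        have hP2tail : P2.tail = (y :: Y') ++ q :: R2 := by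
          apply List.append_cancel_left (as := Q)
          rw [hRe, ← hR1eq, ← hY]; simp
        apply List.mem_of_mem_tail
        rw [hP2tail]
        exact List.mem_append.mpr (Or.inl hpY)
    · cases X with
      | nil =>
        have hQeq : Q = t1 ++ [p] := by simpa using hX.symm
        have : (p : V) = w := by
          rw [hQeq, List.getLast?_concat] at hQw
          exact (Option.some.injEq _ _).mp hQw
        rw [this]; exact hwP2
      | cons x X' =>
        exfalso
        have hc0 : (t1 ++ [p] ++ x :: X') ++ P2.tail = (t1 ++ [p]) ++ q :: R2 := by
          rw [hX, hRe, hR1eq]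
        have hxq : x = q ∧ X' ++ P2.tail = R2 := by
          simpa [List.append_assoc] using hc0
        apply hqQ
        rw [← hX, hxq.1]
        exact List.mem_append.mpr (Or.inr (List.mem_cons_self))
  obtain ⟨A, B, hAB⟩ := List.append_of_mem hpP2
  have hsplit := isPath_split' (hAB ▸ hP2)
  have hmemA : ∀ y ∈ A ++ [p], y ∈ Dset E s r := by
    intro y hy
    apply hP2S
    rw [hAB]
    rcases List.mem_append.mp hy with h | h
    · exact List.mem_append.mpr (Or.inl h)
    · simp only [List.mem_singleton] at h
      rw [h]
      exact List.mem_append.mpr (Or.inr (List.mem_cons_self))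
  have hmemB : ∀ y ∈ p :: B, y ∈ Dset E s r := by
    intro y hy
    apply hP2S
    rw [hAB]
    exact List.mem_append.mpr (Or.inr hy)
  exact ⟨reachableIn_trans' h1 ⟨A ++ [p], hsplit.1, hmemA⟩, ⟨p :: B, hsplit.2, hmemB⟩⟩
end

section
/- Let G be a strongly connected digraph whose vertex set is partitioned into sets C_1, C_2, ..., C_k such that each induced subgraph G[C_i] is strongly connected. If (u,v) is a strong bridge of G with u ∈ C_i and v ∈ C_j for i ≠ j, then (u,v) is the unique edge of G from C_i to C_j: every edge (u',v') of G with u' ∈ C_i and v' ∈ C_j satisfies u' = u and v' = v. -/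
/-!  Basic notions for finite directed graphs given by an edge set `E : Set (V × V)`. -/

variable {V : Type*}

private lemma chain_strengthen {E E' : Set (V × V)} {S : Set V}
    (hE : ∀ a ∈ S, ∀ b ∈ S, (a, b) ∈ E → (a, b) ∈ E') :
    ∀ (l : List V) (a : V), List.Chain (fun x y => (x, y) ∈ E) a l → a ∈ S →
      (∀ w ∈ l, w ∈ S) → List.Chain (fun x y => (x, y) ∈ E') a l
  | [], _, _, _, _ => List.Chain.nil
  | b :: l, a, h, ha, hm => by
      rw [List.Chain, List.chain_cons] at h ⊢
      have hb : b ∈ S := hm b (by simp)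
      exact ⟨hE a ha b hb h.1,
        chain_strengthen hE l b h.2 hb (fun w hw => hm w (by simp [hw]))⟩

private lemma isPath_destruct {E : Set (V × V)} {a b : V} {p : List V} (h : IsPath E a b p) :
    ∃ l, p = a :: l ∧ List.Chain (fun x y => (x, y) ∈ E) a l ∧
      (a :: l).getLast (List.cons_ne_nil _ _) = b := by
  obtain ⟨hc, hh, hl⟩ := h
  match p with
  | [] => simp at hh
  | c :: l =>
    simp at hh; subst hh
    refine ⟨l, rfl, hc, ?_⟩
    rw [List.getLast?_eq_getLast (List.cons_ne_nil _ _)] at hl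
    exact Option.some_injective _ hl

private lemma rtg_of_reachableIn {E E' : Set (V × V)} {S : Set V}
    (hE : ∀ a ∈ S, ∀ b ∈ S, (a, b) ∈ E → (a, b) ∈ E') {a b : V}
    (h : ReachableIn E S a b) :
    Relation.ReflTransGen (fun x y => (x, y) ∈ E') a b := by
  obtain ⟨p, hp, hmem⟩ := h
  obtain ⟨l, rfl, hc, hlast⟩ := isPath_destruct hp
  have ha : a ∈ S := hmem a (by simp)
  have hc' := chain_strengthen hE l a hc ha (fun w hw => hmem w (by simp [hw]))
  exact List.relationReflTransGen_of_exists_isChain_cons l hc' hlast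

private lemma rtg_of_reach {E : Set (V × V)} {a b : V} (h : Reach E a b) :
    Relation.ReflTransGen (fun x y => (x, y) ∈ E) a b := by
  obtain ⟨p, hp⟩ := h
  exact rtg_of_reachableIn (S := Set.univ) (fun _ _ _ _ h => h)
    ⟨p, hp, fun _ _ => Set.mem_univ _⟩

private lemma reach_of_rtg {E : Set (V × V)} {a b : V}
    (h : Relation.ReflTransGen (fun x y => (x, y) ∈ E) a b) : Reach E a b := by
  obtain ⟨l, hc, hlast⟩ := List.exists_isChain_cons_of_relationReflTransGen h
  exact ⟨a :: l, hc, rfl, by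
    rw [List.getLast?_eq_getLast (List.cons_ne_nil _ _), hlast]⟩

/-- if the vertex set is partitioned into sets inducing strongly
connected subgraphs and `(u,v)` is a strong bridge with `u ∈ C i`, `v ∈ C j`, `i ≠ j`,
then `(u,v)` is the unique edge from `C i` to `C j`. -/
theorem stmt14 {V : Type*} {ι : Type*} (E : Set (V × V)) (C : ι → Set V)
    (hSC : StronglyConnected E)
    (hne : ∀ i, (C i).Nonempty)
    (hcover : ∀ x : V, ∃ i, x ∈ C i)
    (hdisj : ∀ i j, i ≠ j → Disjoint (C i) (C j))
    (hCsc : ∀ i, ∀ a ∈ C i, ∀ b ∈ C i, ReachableIn E (C i) a b)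
    (u v : V) (i j : ι) (hij : i ≠ j) (hu : u ∈ C i) (hv : v ∈ C j)
    (hb : StrongBridge E (u, v)) :
    ∀ u' v', (u', v') ∈ E → u' ∈ C i → v' ∈ C j → u' = u ∧ v' = v := by
  intro u' v' he' hu' hv'
  by_contra hcon
  have huv_ne : (u', v') ≠ (u, v) := by
    intro h
    exact hcon ⟨congrArg Prod.fst h, congrArg Prod.snd h⟩
  have hvni : v ∉ C i := fun h => Set.disjoint_left.mp (hdisj i j hij) h hv
  have hunj : u ∉ C j := fun h => Set.disjoint_left.mp (hdisj j i hij.symm) h hu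
  set E' : Set (V × V) := E \ {(u, v)} with hE'
  have hEi : ∀ a ∈ C i, ∀ b ∈ C i, (a, b) ∈ E → (a, b) ∈ E' := by
    intro a ha b hb hab
    refine ⟨hab, fun h => ?_⟩
    simp only [Set.mem_singleton_iff, Prod.mk.injEq] at h
    exact hvni (h.2 ▸ hb)
  have hEj : ∀ a ∈ C j, ∀ b ∈ C j, (a, b) ∈ E → (a, b) ∈ E' := by
    intro a ha b hb hab
    refine ⟨hab, fun h => ?_⟩
    simp only [Set.mem_singleton_iff, Prod.mk.injEq] at h
    exact hunj (h.1 ▸ ha)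
  have step1 : Relation.ReflTransGen (fun x y => (x, y) ∈ E') u u' :=
    rtg_of_reachableIn hEi (hCsc i u hu u' hu')
  have step2 : (u', v') ∈ E' := ⟨he', fun h => huv_ne h⟩
  have step3 : Relation.ReflTransGen (fun x y => (x, y) ∈ E') v' v :=
    rtg_of_reachableIn hEj (hCsc j v' hv' v hv)
  have hdet : Relation.ReflTransGen (fun x y => (x, y) ∈ E') u v :=
    (step1.tail step2).trans step3
  have hlift : ∀ x y : V, Relation.ReflTransGen (fun a b => (a, b) ∈ E) x y →
      Relation.ReflTransGen (fun a b => (a, b) ∈ E') x y := by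
    intro x y h
    induction h with
    | refl => exact .refl
    | @tail b c _ h2 ih =>
      by_cases hc : (b, c) = (u, v)
      · have hb : b = u := congrArg Prod.fst hc
        have hcv : c = v := congrArg Prod.snd hc
        subst hb; subst hcv
        exact ih.trans hdet
      · exact ih.tail ⟨h2, hc⟩
  exact hb.2 (fun x y => reach_of_rtg (hlift x y (rtg_of_reach (hSC x y))))
end

section
/- Let G be a strongly connected digraph whose vertex set is partitioned into k sets C_1, C_2, ..., C_k such that each induced subgraph G[C_i] is strongly connected. Then the number of strong bridges (u,v) of G whose endpoints lie in different parts of the partition (u ∈ C_i, v ∈ C_j with i ≠ j) is at most 2(k-1). -/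
/-!  Basic notions for finite directed graphs given by an edge set `E : Set (V × V)`. -/

variable {V : Type*}

section AuxStmt15

variable {V : Type*}

lemma path_ne_nil' {E : Set (V × V)} {u v : V} {p : List V} (h : IsPath E u v p) : p ≠ [] := by
  rintro rfl; simp [IsPath] at h

lemma isPath_concat {E : Set (V × V)} {u v w : V} {p q : List V}
    (hp : IsPath E u v p) (hq : IsPath E v w q) : IsPath E u w (p ++ q.tail) := by
  obtain ⟨hc, hh, hl⟩ := hp
  obtain ⟨hc', hh', hl'⟩ := hq
  match q with
  | [] => simp at hh'
  | [x] =>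
    simp at hh' hl'
    subst hh'; subst hl'
    exact ⟨by simpa using hc, by simpa using hh, by simpa using hl⟩
  | x :: y :: q' =>
    simp at hh'
    subst hh'
    refine ⟨?_, ?_, ?_⟩
    · refine hc.append hc'.tail ?_
      intro a ha b hb
      rw [hl] at ha
      simp at ha hb
      subst ha; subst hb
      exact (List.isChain_cons_cons.mp hc').1
    · rw [List.head?_append, hh]; rfl
    · rw [List.getLast?_append]
      simp only [List.tail_cons]
      rw [List.getLast?_cons_cons] at hl'
      rw [hl']
      rfl

lemma reach_trans' {E : Set (V × V)} {u v w : V} (h1 : Reach E u v) (h2 : Reach E v w) :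
    Reach E u w := by
  obtain ⟨p, hp⟩ := h1; obtain ⟨q, hq⟩ := h2
  exact ⟨_, isPath_concat hp hq⟩

lemma isPath_reverse {E : Set (V × V)} {u v : V} {p : List V} (h : IsPath E u v p) :
    IsPath (rev E) v u p.reverse := by
  obtain ⟨hc, hh, hl⟩ := h
  refine ⟨?_, ?_, ?_⟩
  · rw [List.Chain', List.isChain_reverse]
    exact hc.imp (fun a b hab => hab)
  · rwa [List.head?_reverse]
  · rwa [List.getLast?_reverse]

lemma reach_rev {E : Set (V × V)} {u v : V} (h : Reach E u v) : Reach (rev E) v u := by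
  obtain ⟨p, hp⟩ := h; exact ⟨_, isPath_reverse hp⟩

lemma first_split {v : V} {p : List V} (h : v ∈ p) :
    ∃ α : List V, v ∉ α ∧ (α ++ [v]) <+: p := by
  induction p with
  | nil => simp at h
  | cons a p ih =>
    by_cases hav : a = v
    · subst hav; exact ⟨[], by simp, by simp⟩
    · have hv : v ∈ p := by
        rcases List.mem_cons.mp h with h' | h'
        · exact absurd h'.symm hav
        · exact h'
      obtain ⟨α, hα, hpre⟩ := ih hv
      obtain ⟨t, ht⟩ := hpre
      exact ⟨a :: α, by simp [hα, Ne.symm hav], ⟨t, by rw [← ht]; simp⟩⟩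

lemma isPath_prefix {E : Set (V × V)} {u v x : V} {p α : List V}
    (hp : IsPath E u v p) (hpre : (α ++ [x]) <+: p) : IsPath E u x (α ++ [x]) := by
  obtain ⟨hc, hh, hl⟩ := hp
  refine ⟨hc.prefix hpre, ?_, by simp⟩
  obtain ⟨t, ht⟩ := hpre
  rw [← ht, List.head?_append] at hh
  cases α with
  | nil => simpa using hh
  | cons a α' => simpa using hh

lemma infix_pair_append {a b : V} :
    ∀ {x y : List V}, [a, b] <:+: (x ++ y) →
      [a, b] <:+: x ∨ [a, b] <:+: y ∨ (x.getLast? = some a ∧ y.head? = some b) := by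
  intro x
  induction x with
  | nil => intro y h; exact Or.inr (Or.inl (by simpa using h))
  | cons c x' ih =>
    intro y h
    obtain ⟨γ, δ, hγδ⟩ := h
    cases γ with
    | nil =>
      simp only [List.nil_append, List.cons_append, List.cons.injEq] at hγδ
      obtain ⟨rfl, hrest⟩ := hγδ
      cases x' with
      | nil =>
        refine Or.inr (Or.inr ⟨by simp, ?_⟩)
        simp only [List.nil_append] at hrest
        rw [← hrest]; rfl
      | cons d x'' =>
        simp only [List.cons_append, List.cons.injEq] at hrest
        obtain ⟨rfl, _⟩ := hrest
        exact Or.inl ⟨[], x'', by simp⟩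
    | cons e γ' =>
      simp only [List.cons_append, List.cons.injEq] at hγδ
      obtain ⟨rfl, hrest⟩ := hγδ
      rcases ih ⟨γ', δ, hrest⟩ with h1 | h1 | h1
      · exact Or.inl (List.infix_cons h1)
      · exact Or.inr (Or.inl h1)
      · cases x' with
        | nil => simp at h1
        | cons f x'' =>
          exact Or.inr (Or.inr ⟨by rw [List.getLast?_cons_cons]; exact h1.1, h1.2⟩)

lemma chain'_diff {E : Set (V × V)} {a b : V} :
    ∀ {p : List V}, p.Chain' (fun x y => (x, y) ∈ E) → ¬ ([a, b] <:+: p) →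
      p.Chain' (fun x y => (x, y) ∈ E \ {(a, b)})
  | [], _, _ => List.isChain_nil
  | [_], _, _ => List.isChain_singleton _
  | x :: y :: p, hc, hn => by
    rw [List.Chain', List.isChain_cons_cons] at hc ⊢
    refine ⟨⟨hc.1, ?_⟩, chain'_diff hc.2 (fun h => hn (List.infix_cons h))⟩
    intro hmem
    simp only [Set.mem_singleton_iff, Prod.mk.injEq] at hmem
    exact hn ⟨[], p, by simp [hmem.1, hmem.2]⟩

lemma isPath_of_not_infix {E : Set (V × V)} {a b u v : V} {p : List V}
    (hp : IsPath E u v p) (hn : ¬ ([a, b] <:+: p)) : IsPath (E \ {(a, b)}) u v p :=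
  ⟨chain'_diff hp.1 hn, hp.2.1, hp.2.2⟩

lemma reach_off {E : Set (V × V)} {a b : V} :
    ∀ (n : ℕ) {q : List V} {w y : V}, q.length ≤ n → IsPath E w y q →
      Reach (E \ {(a, b)}) w y ∨ Reach (E \ {(a, b)}) b y := by
  intro n
  induction n with
  | zero =>
    intro q w y hlen hq
    exact absurd (List.length_eq_zero_iff.mp (Nat.le_zero.mp hlen)) (path_ne_nil' hq)
  | succ n ih =>
    intro q w y hlen hq
    by_cases hin : [a, b] <:+: q
    · obtain ⟨γ, δ, hγδ⟩ := hin
      have hsuf : (b :: δ) <:+ q := ⟨γ ++ [a], by simpa using hγδ⟩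
      have hq' : IsPath E b y (b :: δ) := by
        refine ⟨hq.1.suffix hsuf, rfl, ?_⟩
        obtain ⟨t, ht⟩ := hsuf
        have := hq.2.2
        rw [← ht, List.getLast?_append] at this
        rw [List.getLast?_eq_getLast (by simp)] at this ⊢
        simpa using this
      have hlt : (b :: δ).length ≤ n := by
        have : q.length = γ.length + 2 + δ.length := by
          rw [← hγδ]; simp; omega
        simp only [List.length_cons]
        omega
      rcases ih hlt hq' with h | h
      · exact Or.inr h
      · exact Or.inr h
    · exact Or.inl ⟨q, isPath_of_not_infix hq hin⟩

lemma strong_to_flow {E : Set (V × V)} {s a b y : V} (hab : (a, b) ∈ E)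
    (hsy : Reach E s y) (hny : ¬ Reach (E \ {(a, b)}) s y) : FlowBridge E s (a, b) := by
  have hby : Reach (E \ {(a, b)}) b y := by
    obtain ⟨q, hq⟩ := hsy
    rcases reach_off q.length le_rfl hq with h | h
    · exact absurd h hny
    · exact h
  refine ⟨hab, ?_⟩
  intro p hp
  by_contra hn
  exact hny (reach_trans' ⟨p, isPath_of_not_infix hp hn⟩ hby)

lemma rev_diff {E : Set (V × V)} {a b : V} : rev (E \ {(a, b)}) = rev E \ {(b, a)} := by
  ext e
  simp only [rev, Set.mem_diff, Set.mem_setOf_eq, Set.mem_singleton_iff, Prod.ext_iff]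
  constructor
  · rintro ⟨h1, h2⟩; exact ⟨h1, fun ⟨ha, hb⟩ => h2 ⟨hb, ha⟩⟩
  · rintro ⟨h1, h2⟩; exact ⟨h1, fun ⟨ha, hb⟩ => h2 ⟨hb, ha⟩⟩

lemma rev_rev {E : Set (V × V)} : rev (rev E) = E := by
  ext e; simp [rev]

lemma strongBridge_flow {E : Set (V × V)} {s : V} {e : V × V} (hSC : StronglyConnected E)
    (hb : StrongBridge E e) : FlowBridge E s e ∨ FlowBridge (rev E) s (e.2, e.1) := by
  obtain ⟨a, b⟩ := e
  obtain ⟨he, hns⟩ := hb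
  rw [StronglyConnected] at hns
  push_neg at hns
  obtain ⟨x, y, hxy⟩ := hns
  have hkey : ¬ Reach (E \ {(a, b)}) s y ∨ ¬ Reach (E \ {(a, b)}) x s := by
    by_contra h
    push_neg at h
    exact hxy (reach_trans' h.2 h.1)
  rcases hkey with h | h
  · exact Or.inl (strong_to_flow he (hSC s y) h)
  · right
    refine strong_to_flow (E := rev E) (a := b) (b := a) he (reach_rev (hSC x s)) ?_
    intro hr
    apply h
    rw [← rev_diff] at hr
    have hr2 := reach_rev hr
    rwa [rev_rev] at hr2

lemma no_bridge_into_own_part {E : Set (V × V)} {s u v : V} {S : Set V}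
    (hbr : FlowBridge E s (u, v)) (hu : u ∉ S)
    (hS : ReachableIn E S s v) : False := by
  obtain ⟨r, hr, hrS⟩ := hS
  have h := hbr.2 r hr
  exact hu (hrS u (h.subset (by simp)))

lemma crossing_bridge_unique {E : Set (V × V)} {s u v u' v' : V} {S : Set V}
    (hb : FlowBridge E s (u, v)) (hb' : FlowBridge E s (u', v'))
    (hv : v ∈ S) (hv' : v' ∈ S) (hu : u ∉ S) (hu' : u' ∉ S)
    (hS : ∀ a ∈ S, ∀ b ∈ S, ReachableIn E S a b)
    (hreach : Reach E s v) : u = u' ∧ v = v' := by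
  obtain ⟨p0, hp0⟩ := hreach
  have hvmem : v ∈ p0 := List.mem_of_getLast? hp0.2.2
  obtain ⟨α, hvα, hpre⟩ := first_split hvmem
  have hp : IsPath E (p0.head (path_ne_nil' hp0)) v (α ++ [v]) := by
    refine isPath_prefix ⟨hp0.1, ?_, hp0.2.2⟩ hpre
    exact List.head?_eq_head _
  have hs_eq : p0.head (path_ne_nil' hp0) = s := by
    have := hp0.2.1
    rwa [List.head?_eq_head, Option.some_inj] at this
  rw [hs_eq] at hp
  by_cases hvv : v = v'
  · subst hvv
    refine ⟨?_, rfl⟩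
    have key : ∀ x : V, [x, v] <:+: (α ++ [v]) → α.getLast? = some x := by
      intro x hx
      rcases infix_pair_append hx with h | h | h
      · exact absurd (h.subset (by simp)) hvα
      · exact absurd h.sublist.length_le (by simp)
      · exact h.1
    have e1 := key u (hb.2 _ hp)
    have e2 := key u' (hb'.2 _ hp)
    rw [e1] at e2
    exact Option.some_inj.mp e2
  · exfalso
    obtain ⟨r, hr, hrS⟩ := hS v hv v' hv'
    have hp' : IsPath E s v' ((α ++ [v]) ++ r.tail) := isPath_concat hp hr
    rcases infix_pair_append (hb'.2 _ hp') with h | h | h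
    · rcases infix_pair_append h with h2 | h2 | h2
      · -- [u', v'] <:+: α
        obtain ⟨γ, δ, hγδ⟩ := h2
        have hqpre : ((γ ++ [u']) ++ [v']) <+: (α ++ [v]) := by
          refine List.IsPrefix.trans ⟨δ, ?_⟩ ⟨[v], rfl⟩
          simpa using hγδ
        have hq : IsPath E s v' ((γ ++ [u']) ++ [v']) := isPath_prefix hp hqpre
        obtain ⟨r', hr', hrS'⟩ := hS v' hv' v hv
        have hq2 : IsPath E s v (((γ ++ [u']) ++ [v']) ++ r'.tail) := isPath_concat hq hr'
        rcases infix_pair_append (hb.2 _ hq2) with h3 | h3 | h3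
        · -- v ∈ γ ++ [u'] ++ [v'] ⊆ α : contra
          apply hvα
          have hvin : v ∈ (γ ++ [u']) ++ [v'] := h3.subset (by simp)
          have : ((γ ++ [u']) ++ [v']) <+: α := ⟨δ, by simpa using hγδ⟩
          exact this.subset hvin
        · exact hu (hrS' u (List.mem_of_mem_tail (h3.subset (by simp))))
        · have h4 : v' = u := by simpa using h3.1
          exact hu (h4 ▸ hv')
      · exact absurd h2.sublist.length_le (by simp)
      · have h4 : v = v' := by simpa using h2.2
        exact hvv h4
    · exact hu' (hrS u' (List.mem_of_mem_tail (h.subset (by simp))))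
    · have h4 : v = u' := by simpa using h.1
      exact hu' (h4 ▸ hv)

end AuxStmt15

/-- if the vertex set is partitioned into `k` sets inducing strongly
connected subgraphs, then at most `2(k-1)` strong bridges have endpoints in
different parts. -/
theorem stmt15 {V : Type*} [Fintype V] (E : Set (V × V)) (k : ℕ) (C : Fin k → Set V)
    (hSC : StronglyConnected E)
    (hne : ∀ i, (C i).Nonempty)
    (hcover : ∀ x : V, ∃ i, x ∈ C i)
    (hdisj : ∀ i j, i ≠ j → Disjoint (C i) (C j))
    (hCsc : ∀ i, ∀ a ∈ C i, ∀ b ∈ C i, ReachableIn E (C i) a b) :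
    {e : V × V | StrongBridge E e ∧
      ∃ i j, i ≠ j ∧ e.1 ∈ C i ∧ e.2 ∈ C j}.ncard ≤ 2 * (k - 1) := by
  classical
  cases isEmpty_or_nonempty V with
  | inl hemp =>
    rw [show {e : V × V | StrongBridge E e ∧ ∃ i j, i ≠ j ∧ e.1 ∈ C i ∧ e.2 ∈ C j} = ∅ from
      Set.eq_empty_of_isEmpty _]
    simp
  | inr hne' =>
    obtain ⟨s⟩ := hne'
    set T := {e : V × V | StrongBridge E e ∧ ∃ i j, i ≠ j ∧ e.1 ∈ C i ∧ e.2 ∈ C j} with hT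
    choose idx hidx using hcover
    have idx_eq : ∀ x i, x ∈ C i → idx x = i := by
      intro x i hx
      by_contra h
      exact (hdisj _ _ h).ne_of_mem (hidx x) hx rfl
    set i0 := idx s with hi0def
    have hi0 : s ∈ C i0 := hidx s
    set T₁ := {e : V × V | e ∈ T ∧ FlowBridge E s e} with hT1
    set T₂ := {e : V × V | e ∈ T ∧ FlowBridge (rev E) s (e.2, e.1)} with hT2
    have hsub : T ⊆ T₁ ∪ T₂ := by
      intro e he
      rcases strongBridge_flow (s := s) hSC he.1 with h | h
      · exact Or.inl ⟨he, h⟩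
      · exact Or.inr ⟨he, h⟩
    have hrevSC : StronglyConnected (rev E) := fun u v => reach_rev (hSC v u)
    have hCsc' : ∀ i, ∀ a ∈ C i, ∀ b ∈ C i, ReachableIn (rev E) (C i) a b := by
      intro i a ha b hb
      obtain ⟨p, hp, hpS⟩ := hCsc i b hb a ha
      exact ⟨p.reverse, isPath_reverse hp, fun w hw => hpS w (List.mem_reverse.mp hw)⟩
    have hnotmem : ∀ {x : V} {i j : Fin k}, x ∈ C i → i ≠ j → x ∉ C j := by
      intro x i j hx hij hmem
      exact (hdisj i j hij).ne_of_mem hx hmem rfl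
    have hcard : ({i : Fin k | i ≠ i0}).ncard = k - 1 := by
      have hcompl : {i : Fin k | i ≠ i0} = Set.univ \ {i0} := by
        ext i; simp
      rw [hcompl, Set.ncard_diff (by simp), Set.ncard_univ, Set.ncard_singleton]
      simp
    have h1 : T₁.ncard ≤ k - 1 := by
      rw [← hcard]
      apply Set.ncard_le_ncard_of_injOn (fun e => idx e.2)
      · rintro ⟨a, b⟩ ⟨⟨hbr, i, j, hij, ha, hb⟩, hfb⟩
        simp only [Set.mem_setOf_eq]
        rw [idx_eq b j hb]
        rintro rfl
        exact no_bridge_into_own_part hfb (hnotmem ha hij) (hCsc i0 s hi0 b hb)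
      · rintro ⟨a, b⟩ ⟨⟨hbr, i, j, hij, ha, hb⟩, hfb⟩
          ⟨a', b'⟩ ⟨⟨hbr', i', j', hij', ha', hb'⟩, hfb'⟩ heq
        simp only at heq
        rw [idx_eq b j hb, idx_eq b' j' hb'] at heq
        subst heq
        have huv := crossing_bridge_unique hfb hfb' hb hb'
          (hnotmem ha hij) (hnotmem ha' hij') (hCsc j) (hSC s b)
        exact Prod.ext_iff.mpr ⟨huv.1, huv.2⟩
    have h2 : T₂.ncard ≤ k - 1 := by
      rw [← hcard]
      apply Set.ncard_le_ncard_of_injOn (fun e => idx e.1)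
      · rintro ⟨a, b⟩ ⟨⟨hbr, i, j, hij, ha, hb⟩, hfb⟩
        simp only [Set.mem_setOf_eq]
        rw [idx_eq a i ha]
        rintro rfl
        exact no_bridge_into_own_part hfb (hnotmem hb hij.symm) (hCsc' i0 s hi0 a ha)
      · rintro ⟨a, b⟩ ⟨⟨hbr, i, j, hij, ha, hb⟩, hfb⟩
          ⟨a', b'⟩ ⟨⟨hbr', i', j', hij', ha', hb'⟩, hfb'⟩ heq
        simp only at heq
        rw [idx_eq a i ha, idx_eq a' i' ha'] at heq
        subst heq
        have huv := crossing_bridge_unique hfb hfb' ha ha'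
          (hnotmem hb hij.symm) (hnotmem hb' hij'.symm) (hCsc' i) (hrevSC s a)
        exact Prod.ext_iff.mpr ⟨huv.2, huv.1⟩
    calc T.ncard ≤ (T₁ ∪ T₂).ncard := Set.ncard_le_ncard hsub (Set.toFinite _)
      _ ≤ T₁.ncard + T₂.ncard := Set.ncard_union_le _ _
      _ ≤ (k - 1) + (k - 1) := Nat.add_le_add h1 h2
      _ = 2 * (k - 1) := by ring
end

section
/- Let G be a strongly connected digraph and let u and v be two vertices that are not 2-edge-connected. Then there exists an edge e of G such that every path from u to v in G contains e, or every path from v to u in G contains e; moreover, any such edge e is a strong bridge of G. -/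
/-!  Basic notions for finite directed graphs given by an edge set `E : Set (V × V)`. -/

variable {V : Type*}

namespace Stmt16
variable {V : Type*}



def steps (p : List V) : List (V × V) := p.zip p.tail

@[simp] lemma steps_nil : steps ([] : List V) = [] := rfl
@[simp] lemma steps_singleton (x : V) : steps [x] = [] := rfl
@[simp] lemma steps_cons_cons (x y : V) (t : List V) :
    steps (x :: y :: t) = (x, y) :: steps (y :: t) := rfl

lemma mem_of_mem_steps {a b : V} {p : List V} (h : (a, b) ∈ steps p) : a ∈ p ∧ b ∈ p := by
  have := List.of_mem_zip h
  exact ⟨this.1, List.mem_of_mem_tail this.2⟩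

lemma infix_pair_iff {a b : V} {p : List V} : [a, b] <:+: p ↔ (a, b) ∈ steps p := by
  induction p with
  | nil => simp [List.infix_nil]
  | cons x t ih =>
    rw [List.infix_cons_iff]
    cases t with
    | nil =>
      simp only [steps_singleton, List.not_mem_nil, iff_false]
      rintro (hpre | hinf)
      · rcases hpre with ⟨r, hr⟩
        simp at hr
      · simp [List.infix_nil] at hinf
    | cons y t' =>
      simp only [steps_cons_cons, List.mem_cons, ← ih]
      constructor
      · rintro (hpre | hinf)
        · left
          rcases hpre with ⟨r, hr⟩
          injection hr with h1 h2
          injection h2 with h3 _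
          simp [h1, h3]
        · right; exact hinf
      · rintro (heq | hinf)
        · left
          injection heq with h1 h2
          exact ⟨t', by simp [h1, h2]⟩
        · right; exact hinf

lemma chain'_iff_steps {R : V → V → Prop} {p : List V} :
    p.Chain' R ↔ ∀ e ∈ steps p, R e.1 e.2 := by
  induction p with
  | nil => simp [List.Chain', List.isChain_nil]
  | cons x t ih =>
    cases t with
    | nil => simp [List.Chain', List.isChain_singleton]
    | cons y t' =>
      rw [show List.Chain' R (x :: y :: t') ↔ R x y ∧ List.Chain' R (y :: t') from
        List.isChain_cons_cons, ih]
      simp only [steps_cons_cons, List.mem_cons]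
      constructor
      · rintro ⟨h1, h2⟩ e (rfl | he)
        · exact h1
        · exact h2 e he
      · intro h
        exact ⟨h (x, y) (Or.inl rfl), fun e he => h e (Or.inr he)⟩

lemma steps_subset_of_infix {l m : List V} (h : l <:+: m) :
    ∀ e ∈ steps l, e ∈ steps m := by
  rintro ⟨a, b⟩ he
  rw [← infix_pair_iff] at he ⊢
  exact he.trans h

lemma nodup_steps {p : List V} (h : p.Nodup) : (steps p).Nodup := by
  induction p with
  | nil => simp
  | cons x t ih =>
    cases t with
    | nil => simp
    | cons y t' =>
      rw [steps_cons_cons]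
      refine List.nodup_cons.2 ⟨fun hmem => ?_, ih (List.nodup_cons.1 h).2⟩
      exact (List.nodup_cons.1 h).1 (mem_of_mem_steps hmem).1


lemma isPath_ne_nil {E : Set (V × V)} {u v : V} {p : List V} (h : IsPath E u v p) : p ≠ [] := by
  rintro rfl; simp [IsPath] at h

lemma isPath_mono {E E' : Set (V × V)} {u v : V} {p : List V} (hE : E ⊆ E')
    (h : IsPath E u v p) : IsPath E' u v p :=
  ⟨h.1.imp (fun _ _ hab => hE hab), h.2⟩

lemma isPath_singleton (E : Set (V × V)) (u : V) : IsPath E u u [u] :=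
  ⟨List.isChain_singleton u, rfl, rfl⟩

lemma isPath_steps_mem {E : Set (V × V)} {u v : V} {p : List V} (h : IsPath E u v p) :
    ∀ e ∈ steps p, e ∈ E := by
  intro e he
  have := chain'_iff_steps.1 h.1 e he
  exact this

lemma isPath_cons {E : Set (V × V)} {u v x : V} {p : List V}
    (hxu : (x, u) ∈ E) (h : IsPath E u v p) : IsPath E x v (x :: p) := by
  obtain ⟨hc, hh, hl⟩ := h
  refine ⟨List.isChain_cons.2 ⟨?_, hc⟩, rfl, ?_⟩
  · intro z hz; rw [hh] at hz; cases hz; exact hxu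
  · rw [show x :: p = [x] ++ p from rfl, List.getLast?_append, hl]; rfl

lemma isPath_append_edge {E : Set (V × V)} {u x y : V} {p : List V}
    (h : IsPath E u x p) (hxy : (x, y) ∈ E) : IsPath E u y (p ++ [y]) := by
  obtain ⟨hc, hh, hl⟩ := h
  refine ⟨List.isChain_append.2 ⟨hc, List.isChain_singleton y, ?_⟩, ?_, ?_⟩
  · intro a ha b hb
    rw [hl] at ha; cases ha
    cases hb
    exact hxy
  · rw [List.head?_append_of_ne_nil]
    · exact hh
    · rintro rfl; simp at hh
  · rw [List.getLast?_append]; rfl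

lemma exists_nodup_path {E : Set (V × V)} :
    ∀ (n : ℕ) (u v : V) (p : List V), p.length ≤ n → IsPath E u v p →
    ∃ q, IsPath E u v q ∧ q.Nodup ∧ (∀ e ∈ steps q, e ∈ steps p) ∧ (∀ x ∈ q, x ∈ p) := by
  intro n
  induction n with
  | zero =>
    intro u v p hlen hp
    exact absurd (List.length_eq_zero_iff.1 (Nat.le_zero.1 hlen)) (isPath_ne_nil hp)
  | succ n ih =>
    intro u v p hlen hp
    obtain ⟨a, t, rfl⟩ : ∃ a t, p = a :: t := by
      cases p with
      | nil => exact absurd rfl (isPath_ne_nil hp)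
      | cons a t => exact ⟨a, t, rfl⟩
    have hu : u = a := by
      have h := hp.2.1
      simp only [List.head?_cons, Option.some.injEq] at h
      exact h.symm
    subst hu
    by_cases ha : u ∈ t
    · obtain ⟨t1, t2, rfl⟩ := List.append_of_mem ha
      have hsuf : (u :: t2) <:+ (u :: t1 ++ u :: t2) := ⟨u :: t1, rfl⟩
      have hpath : IsPath E u v (u :: t2) := by
        refine ⟨hp.1.suffix hsuf, rfl, ?_⟩
        have hlast := hp.2.2
        rw [← List.cons_append, List.getLast?_append] at hlast
        cases h2 : (u :: t2).getLast? with
        | none => simp at h2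
        | some z => rw [h2] at hlast; simp at hlast; simp [h2, hlast]
      have hlen2 : (u :: t2).length ≤ n := by
        simp only [List.length_cons, List.length_append] at hlen ⊢
        omega
      obtain ⟨q, hq, hnd, hst, hmem⟩ := ih u v (u :: t2) hlen2 hpath
      exact ⟨q, hq, hnd, fun e he => steps_subset_of_infix hsuf.isInfix e (hst e he),
        fun x hx => hsuf.subset (hmem x hx)⟩
    · cases t with
      | nil =>
        refine ⟨[u], ⟨List.isChain_singleton u, rfl, hp.2.2⟩, by simp, by simp, by simp⟩
      | cons b t' =>
        have hpath : IsPath E b v (b :: t') := by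
          refine ⟨hp.1.tail, rfl, ?_⟩
          have hlast := hp.2.2
          rw [show u :: b :: t' = [u] ++ (b :: t') from rfl, List.getLast?_append] at hlast
          cases h2 : (b :: t').getLast? with
          | none => simp at h2
          | some z => rw [h2] at hlast; simp at hlast; simp [h2, hlast]
        have hub : (u, b) ∈ E := by
          have := chain'_iff_steps.1 hp.1 (u, b) (by simp [steps])
          exact this
        obtain ⟨q, hq, hnd, hst, hmem⟩ := ih b v (b :: t') (by simpa using hlen) hpath
        have hq_ne : q ≠ [] := (isPath_ne_nil hq)
        obtain ⟨c, q', rfl⟩ : ∃ c q', q = c :: q' := by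
          cases q with
          | nil => exact absurd rfl hq_ne
          | cons c q' => exact ⟨c, q', rfl⟩
        have hcb : b = c := by
          have hh := hq.2.1
          simp only [List.head?_cons, Option.some.injEq] at hh
          exact hh.symm
        subst hcb
        refine ⟨u :: b :: q', isPath_cons hub hq, ?_, ?_, ?_⟩
        · exact List.nodup_cons.2 ⟨fun hmem2 => ha (hmem u hmem2), hnd⟩
        · intro e he
          rw [show steps (u :: b :: q') = (u, b) :: steps (b :: q') from rfl] at he
          rcases List.mem_cons.1 he with rfl | he'
          · simp [steps]
          · have := hst e he'
            rw [show steps (u :: b :: t') = (u, b) :: steps (b :: t') from rfl]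
            exact List.mem_cons_of_mem _ this
        · intro x hx
          rcases List.mem_cons.1 hx with rfl | hx'
          · simp
          · exact List.mem_cons_of_mem _ (hmem x hx')


section Crossing
variable {S : Set V}

lemma cross_exists : ∀ (p : List V) (x y : V), p.head? = some x → p.getLast? = some y →
    x ∈ S → y ∉ S → ∃ a b, (a, b) ∈ steps p ∧ a ∈ S ∧ b ∉ S := by
  intro p
  induction p with
  | nil => intro x y hx; simp at hx
  | cons c t ih =>
    intro x y hx hy hxS hyS
    simp only [List.head?_cons, Option.some.injEq] at hx
    subst hx
    cases t with
    | nil =>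
      simp only [List.getLast?_singleton, Option.some.injEq] at hy
      subst hy; exact absurd hxS hyS
    | cons d t' =>
      by_cases hd : d ∈ S
      · have hy' : (d :: t').getLast? = some y := by
          rw [show c :: d :: t' = [c] ++ (d :: t') from rfl, List.getLast?_append] at hy
          cases h2 : (d :: t').getLast? with
          | none => simp at h2
          | some z => rw [h2] at hy; simp at hy; simp [h2, hy]
        obtain ⟨a, b, hab, haS, hbS⟩ := ih d y rfl hy' hd hyS
        exact ⟨a, b, List.mem_cons_of_mem _ hab, haS, hbS⟩
      · exact ⟨c, d, by simp, hxS, hd⟩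

lemma notS_forward : ∀ (p : List V) (c : V),
    (∀ a b, (a, b) ∈ steps p → a ∉ S → b ∉ S) → p.head? = some c → c ∉ S →
    ∀ z ∈ p, z ∉ S := by
  intro p
  induction p with
  | nil => intro c _ hc; simp at hc
  | cons x t ih =>
    intro c hcl hx hcS z hz
    simp only [List.head?_cons, Option.some.injEq] at hx
    subst hx
    cases t with
    | nil => rcases List.mem_singleton.1 hz with rfl; exact hcS
    | cons d t' =>
      rcases List.mem_cons.1 hz with rfl | hz'
      · exact hcS
      · have hd : d ∉ S := hcl x d (by simp) hcS
        exact ih d (fun a b hab => hcl a b (List.mem_cons_of_mem _ hab)) rfl hd z hz'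

lemma cross_unique : ∀ (p : List V) (a b a' b' : V),
    (∀ x y, (x, y) ∈ steps p → y ∈ S → x ∈ S) →
    (a, b) ∈ steps p → a ∈ S → b ∉ S →
    (a', b') ∈ steps p → a' ∈ S → b' ∉ S → a = a' ∧ b = b' := by
  intro p
  induction p with
  | nil => intro a b a' b' _ h; simp at h
  | cons x t ih =>
    intro a b a' b' hcl hab haS hbS hab' haS' hbS'
    cases t with
    | nil => simp at hab
    | cons d t' =>
      have hclt : ∀ x y, (x, y) ∈ steps (d :: t') → y ∈ S → x ∈ S :=
        fun x y hxy => hcl x y (by simp [hxy])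
      have hall : ∀ c, d ∉ S → c ∈ d :: t' → c ∉ S := by
        intro c hdS hc
        exact notS_forward (d :: t') d
          (fun p q hpq hp hq => hp (hclt p q hpq hq)) rfl hdS c hc
      rcases List.mem_cons.1 hab with heq | hmem
      · injection heq with h1 h2
        subst h1; subst h2
        rcases List.mem_cons.1 hab' with heq' | hmem'
        · injection heq' with h1' h2'
          exact ⟨h1'.symm, h2'.symm⟩
        · exfalso
          exact hall a' hbS (mem_of_mem_steps hmem').1 haS'
      · rcases List.mem_cons.1 hab' with heq' | hmem'
        · injection heq' with h1' h2'
          subst h1'; subst h2'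
          exfalso
          exact hall a hbS' (mem_of_mem_steps hmem).1 haS
        · exact ih a b a' b' hclt hmem haS hbS hmem' haS' hbS'

end Crossing

section Div
variable [DecidableEq V]

/-- divergence (out-degree minus in-degree) of a finite edge set at a vertex -/
noncomputable def dv (F : Finset (V × V)) (x : V) : ℤ :=
  ((F.filter fun e => e.1 = x).card : ℤ) - ((F.filter fun e => e.2 = x).card : ℤ)

@[simp] lemma dv_empty (x : V) : dv (∅ : Finset (V × V)) x = 0 := by simp [dv]

lemma dv_insert {F : Finset (V × V)} {e : V × V} (he : e ∉ F) (x : V) :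
    dv (insert e F) x = dv F x + (if e.1 = x then 1 else 0) - (if e.2 = x then 1 else 0) := by
  unfold dv
  rw [Finset.filter_insert, Finset.filter_insert]
  by_cases h1 : e.1 = x <;> by_cases h2 : e.2 = x <;>
    simp [h1, h2, Finset.card_insert_of_notMem, fun p => he, Finset.mem_filter] <;> ring_nf
  all_goals
    first
    | (rw [Finset.card_insert_of_notMem (fun hc => he (Finset.mem_filter.1 hc).1),
        Finset.card_insert_of_notMem (fun hc => he (Finset.mem_filter.1 hc).1)]; push_cast; ring)
    | (rw [Finset.card_insert_of_notMem (fun hc => he (Finset.mem_filter.1 hc).1)]; push_cast; ring)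
    | (push_cast; ring)

lemma dv_union {F G : Finset (V × V)} (h : Disjoint F G) (x : V) :
    dv (F ∪ G) x = dv F x + dv G x := by
  unfold dv
  rw [Finset.filter_union, Finset.filter_union,
    Finset.card_union_of_disjoint (h.mono (Finset.filter_subset _ _) (Finset.filter_subset _ _)),
    Finset.card_union_of_disjoint (h.mono (Finset.filter_subset _ _) (Finset.filter_subset _ _))]
  push_cast; ring

lemma dv_sdiff {F T : Finset (V × V)} (h : T ⊆ F) (x : V) :
    dv (F \ T) x = dv F x - dv T x := by
  have : (F \ T) ∪ T = F := Finset.sdiff_union_of_subset h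
  have hd : Disjoint (F \ T) T := Finset.sdiff_disjoint
  have := dv_union hd x
  rw [Finset.sdiff_union_of_subset h] at this
  linarith

lemma dv_image_swap (F : Finset (V × V)) (x : V) :
    dv (F.image Prod.swap) x = - dv F x := by
  unfold dv
  have h1 : (F.image Prod.swap).filter (fun e => e.1 = x)
      = (F.filter fun e => e.2 = x).image Prod.swap := by
    ext e
    simp only [Finset.mem_filter, Finset.mem_image]
    constructor
    · rintro ⟨⟨f, hf, rfl⟩, hx⟩; exact ⟨f, ⟨hf, hx⟩, rfl⟩
    · rintro ⟨f, ⟨hf, hx⟩, rfl⟩; exact ⟨⟨f, hf, rfl⟩, hx⟩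
  have h2 : (F.image Prod.swap).filter (fun e => e.2 = x)
      = (F.filter fun e => e.1 = x).image Prod.swap := by
    ext e
    simp only [Finset.mem_filter, Finset.mem_image]
    constructor
    · rintro ⟨⟨f, hf, rfl⟩, hx⟩; exact ⟨f, ⟨hf, hx⟩, rfl⟩
    · rintro ⟨f, ⟨hf, hx⟩, rfl⟩; exact ⟨⟨f, hf, rfl⟩, hx⟩
  rw [h1, h2, Finset.card_image_of_injective _ Prod.swap_injective,
    Finset.card_image_of_injective _ Prod.swap_injective]
  ring

lemma dv_steps : ∀ (p : List V) (x z y : V), p.head? = some x → p.getLast? = some z →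
    (steps p).Nodup →
    dv (steps p).toFinset y = (if x = y then 1 else 0) - (if z = y then 1 else 0) := by
  intro p
  induction p with
  | nil => intro x z y hx; simp at hx
  | cons a t ih =>
    intro x z y hx hz hnd
    simp only [List.head?_cons, Option.some.injEq] at hx
    subst hx
    cases t with
    | nil =>
      simp only [List.getLast?_singleton, Option.some.injEq] at hz
      subst hz
      simp
    | cons b t' =>
      have hz' : (b :: t').getLast? = some z := by
        rw [show a :: b :: t' = [a] ++ (b :: t') from rfl, List.getLast?_append] at hz
        cases h2 : (b :: t').getLast? with
        | none => simp at h2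
        | some w => rw [h2] at hz; simp at hz; simp [h2, hz]
      rw [steps_cons_cons] at hnd ⊢
      have hnotmem : (a, b) ∉ steps (b :: t') := (List.nodup_cons.1 hnd).1
      have hins : (((a, b) :: steps (b :: t')).toFinset : Finset (V × V))
          = insert (a, b) (steps (b :: t')).toFinset := by simp
      rw [hins, dv_insert (by simpa using hnotmem) y,
        ih b z y rfl hz' (List.nodup_cons.1 hnd).2]
      by_cases h1 : a = y <;> by_cases h2 : b = y <;> by_cases h3 : z = y <;>
        simp [h1, h2, h3] <;> ring

lemma extract : ∀ (n : ℕ) (F : Finset (V × V)), F.card ≤ n → ∀ (x v : V),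
    (x ≠ v → 0 < dv F x) → (∀ y, y ≠ v → 0 ≤ dv F y) →
    ∃ p, p.Chain' (fun a b => (a, b) ∈ F) ∧ p.head? = some x ∧ p.getLast? = some v ∧
      (steps p).Nodup := by
  intro n
  induction n with
  | zero =>
    intro F hF x v hx _
    by_cases hxv : x = v
    · subst hxv; exact ⟨[x], List.isChain_singleton x, rfl, rfl, by simp⟩
    · exfalso
      have : F = ∅ := Finset.card_eq_zero.1 (Nat.le_zero.1 hF)
      subst this
      have := hx hxv
      simp at this
  | succ n ih =>
    intro F hF x v hx hall
    by_cases hxv : x = v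
    · subst hxv; exact ⟨[x], List.isChain_singleton x, rfl, rfl, by simp⟩
    · have hpos := hx hxv
      have hout : 0 < (F.filter fun e => e.1 = x).card := by
        unfold dv at hpos
        by_contra hc
        push_neg at hc
        interval_cases h : (F.filter fun e => e.1 = x).card
        · simp [h] at hpos; omega
      obtain ⟨e, he⟩ := Finset.card_pos.1 hout
      obtain ⟨e1, y⟩ := e
      have heF : (e1, y) ∈ F := (Finset.mem_filter.1 he).1
      have he1 : x = e1 := ((Finset.mem_filter.1 he).2).symm
      subst he1
      set F' := F.erase (x, y) with hF'
      have heF' : (x, y) ∉ F' := Finset.notMem_erase _ F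
      have hFins : F = insert (x, y) F' := (Finset.insert_erase heF).symm
      have hdvF : ∀ w, dv F w = dv F' w + (if x = w then 1 else 0)
          - (if y = w then 1 else 0) := by
        intro w
        conv_lhs => rw [hFins]
        simpa using dv_insert heF' w
      have hcard : F'.card ≤ n := by
        have h1 : 1 ≤ F.card := Finset.card_pos.2 ⟨(x, y), heF⟩
        have h2 := Finset.card_erase_of_mem heF
        rw [← hF'] at h2
        omega
      have hrec1 : y ≠ v → 0 < dv F' y := by
        intro hyv
        have h2 := hdvF y
        rw [if_pos rfl] at h2
        by_cases hxy : x = y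
        · rw [if_pos hxy] at h2
          have hpy : 0 < dv F y := hxy ▸ hpos
          omega
        · rw [if_neg hxy] at h2
          have := hall y hyv
          omega
      have hrec2 : ∀ w, w ≠ v → 0 ≤ dv F' w := by
        intro w hwv
        have h2 := hdvF w
        by_cases hxw : x = w
        · subst hxw
          rw [if_pos rfl] at h2
          split at h2 <;> omega
        · rw [if_neg hxw] at h2
          have := hall w hwv
          split at h2 <;> omega
      obtain ⟨q, hqc, hqh, hql, hqnd⟩ := ih F' hcard y v hrec1 hrec2
      obtain ⟨c, q', rfl⟩ : ∃ c q', q = c :: q' := by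
        cases q with
        | nil => simp at hqh
        | cons c q' => exact ⟨c, q', rfl⟩
      have hcy : y = c := Eq.symm (by simpa using hqh)
      subst hcy
      refine ⟨x :: y :: q', ?_, rfl, ?_, ?_⟩
      · unfold List.Chain'
        rw [List.isChain_cons_cons]
        exact ⟨heF, hqc.imp fun a b hab => Finset.mem_of_mem_erase hab⟩
      · rw [show x :: y :: q' = [x] ++ (y :: q') from rfl, List.getLast?_append, hql]; rfl
      · rw [steps_cons_cons]
        refine List.nodup_cons.2 ⟨fun hmem => ?_, hqnd⟩
        have : (x, y) ∈ F' := chain'_iff_steps.1 hqc (x, y) hmem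
        exact heF' this
end Div


lemma pathEdges_iff_steps {p : List V} {e : V × V} :
    e ∈ pathEdges p ↔ e ∈ steps p := by
  obtain ⟨a, b⟩ := e
  show [a, b] <:+: p ↔ _
  exact infix_pair_iff

lemma menger2 (E : Set (V × V)) (u v : V) (hne : u ≠ v) (hR : Reach E u v)
    (H : ∀ e ∈ E, ∃ p, IsPath E u v p ∧ ¬ [e.1, e.2] <:+: p) :
    ∃ p q, IsPath E u v p ∧ IsPath E u v q ∧ pathEdges p ∩ pathEdges q = ∅ := by
  classical
  obtain ⟨P0, hP0⟩ := hR
  obtain ⟨P, hP, hPnd, -, -⟩ := exists_nodup_path P0.length u v P0 le_rfl hP0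
  set Er : Set (V × V) := (E \ pathEdges P) ∪ {e | (e.2, e.1) ∈ pathEdges P} with hEr
  by_cases hres : Reach Er u v
  · -- residual augmenting path exists: build two edge-disjoint trails
    obtain ⟨Q0, hQ0⟩ := hres
    obtain ⟨Q, hQ, hQnd, -, -⟩ := exists_nodup_path Q0.length u v Q0 le_rfl hQ0
    set SP := (steps P).toFinset with hSP
    set SQ := (steps Q).toFinset with hSQ
    set QF := SQ.filter (fun e => e ∈ E \ pathEdges P) with hQF
    set QB := SQ.filter (fun e => e ∉ E \ pathEdges P) with hQB
    set RB := QB.image Prod.swap with hRB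
    set F := (SP ∪ QF) \ RB with hF
    have hQsteps : ∀ e ∈ steps Q, e ∈ Er := isPath_steps_mem hQ
    have hRBsub : RB ⊆ SP := by
      intro e he
      obtain ⟨f, hf, rfl⟩ := Finset.mem_image.1 he
      have hfQ := Finset.mem_filter.1 hf
      have hfEr : f ∈ Er := hQsteps f (List.mem_toFinset.1 hfQ.1)
      rcases hfEr with hfe | hfe
      · exact absurd hfe hfQ.2
      · exact List.mem_toFinset.2 (pathEdges_iff_steps.1 hfe)
    have hdisjPF : Disjoint SP QF := by
      rw [Finset.disjoint_left]
      intro e heP heF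
      have h1 : e ∈ pathEdges P := pathEdges_iff_steps.2 (List.mem_toFinset.1 heP)
      have h2 := (Finset.mem_filter.1 heF).2
      exact h2.2 h1
    have hRBsub' : RB ⊆ SP ∪ QF := hRBsub.trans Finset.subset_union_left
    have hdvSP : ∀ z, dv SP z = (if u = z then 1 else 0) - (if v = z then 1 else 0) :=
      fun z => dv_steps P u v z hP.2.1 hP.2.2 (nodup_steps hPnd)
    have hdvSQ : ∀ z, dv SQ z = (if u = z then 1 else 0) - (if v = z then 1 else 0) :=
      fun z => dv_steps Q u v z hQ.2.1 hQ.2.2 (nodup_steps hQnd)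
    have hdvF : ∀ z, dv F z =
        2 * ((if u = z then 1 else 0) - (if v = z then 1 else 0)) := by
      intro z
      have h1 : dv F z = dv (SP ∪ QF) z - dv RB z := dv_sdiff hRBsub' z
      have h2 : dv (SP ∪ QF) z = dv SP z + dv QF z := dv_union hdisjPF z
      have h3 : dv RB z = - dv QB z := dv_image_swap QB z
      have h4 : QF ∪ QB = SQ := Finset.filter_union_filter_not_eq _ SQ
      have h5 : Disjoint QF QB := Finset.disjoint_filter_filter_not SQ SQ _
      have h6 : dv QF z + dv QB z = dv SQ z := by rw [← dv_union h5 z, h4]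
      rw [h1, h2, h3, hdvSP z]
      have := hdvSQ z
      omega
    have hFE : ∀ e ∈ F, e ∈ E := by
      intro e he
      rcases Finset.mem_union.1 (Finset.mem_sdiff.1 he).1 with h1 | h1
      · exact isPath_steps_mem hP e (List.mem_toFinset.1 h1)
      · exact ((Finset.mem_filter.1 h1).2).1
    obtain ⟨T1, hT1c, hT1h, hT1l, hT1nd⟩ := extract F.card F le_rfl u v
      (fun _ => by
        rw [hdvF u, if_pos rfl, if_neg (show ¬ v = u from fun hc => hne hc.symm)]; omega)
      (fun y hy => by
        rw [hdvF y, if_neg (show ¬ v = y from fun hc => hy hc.symm)]; split <;> omega)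
    have hT1sub : (steps T1).toFinset ⊆ F := by
      intro e he
      exact chain'_iff_steps.1 hT1c e (List.mem_toFinset.1 he)
    set F2 := F \ (steps T1).toFinset with hF2
    have hdvF2 : ∀ z, dv F2 z = (if u = z then 1 else 0) - (if v = z then 1 else 0) := by
      intro z
      rw [dv_sdiff hT1sub z, hdvF z, dv_steps T1 u v z hT1h hT1l hT1nd]
      ring
    obtain ⟨T2, hT2c, hT2h, hT2l, hT2nd⟩ := extract F2.card F2 le_rfl u v
      (fun _ => by
        rw [hdvF2 u, if_pos rfl, if_neg (show ¬ v = u from fun hc => hne hc.symm)]; omega)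
      (fun y hy => by
        rw [hdvF2 y, if_neg (show ¬ v = y from fun hc => hy hc.symm)]; split <;> omega)
    refine ⟨T1, T2, ?_, ?_, ?_⟩
    · exact ⟨hT1c.imp (fun a b hab => hFE (a, b) hab), hT1h, hT1l⟩
    · refine ⟨hT2c.imp (fun a b hab => ?_), hT2h, hT2l⟩
      exact hFE (a, b) (Finset.mem_sdiff.1 hab).1
    · ext e
      simp only [Set.mem_inter_iff, Set.mem_empty_iff_false, iff_false, not_and]
      intro h1 h2
      have he1 : e ∈ steps T1 := pathEdges_iff_steps.1 h1
      have he2 : e ∈ steps T2 := pathEdges_iff_steps.1 h2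
      have : e ∈ F2 := chain'_iff_steps.1 hT2c e he2
      exact (Finset.mem_sdiff.1 this).2 (List.mem_toFinset.2 he1)
  · -- no residual path: a unique crossing edge lies on every u→v path, contradiction
    exfalso
    set S : Set V := {x | Reach Er u x} with hS
    have huS : u ∈ S := ⟨[u], isPath_singleton Er u⟩
    have hvS : v ∉ S := hres
    have hclose : ∀ x y, x ∈ S → (x, y) ∈ Er → y ∈ S := by
      rintro x y ⟨p, hp⟩ hxy
      exact ⟨p ++ [y], isPath_append_edge hp hxy⟩
    have hback : ∀ a b, (a, b) ∈ steps P → b ∈ S → a ∈ S := by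
      intro a b hab hbS
      apply hclose b a hbS
      exact Or.inr (pathEdges_iff_steps.2 hab)
    obtain ⟨a, b, hab, haS, hbS⟩ := cross_exists P u v hP.2.1 hP.2.2 huS hvS
    have habE : (a, b) ∈ E := isPath_steps_mem hP _ hab
    obtain ⟨W, hW, hWavoid⟩ := H (a, b) habE
    obtain ⟨x, y, hxy, hxS, hyS⟩ := cross_exists W u v hW.2.1 hW.2.2 huS hvS
    have hxyE : (x, y) ∈ E := isPath_steps_mem hW _ hxy
    have hxyP : (x, y) ∈ steps P := by
      by_contra hc
      have hmem : (x, y) ∈ Er :=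
        Or.inl ⟨hxyE, fun hmem => hc (pathEdges_iff_steps.1 hmem)⟩
      exact hyS (hclose x y hxS hmem)
    obtain ⟨rfl, rfl⟩ := cross_unique P a b x y hback hab haS hbS hxyP hxS hyS
    exact hWavoid (infix_pair_iff.2 hxy)

lemma pathEdges_singleton (x : V) : pathEdges ([x] : List V) = ∅ := by
  ext e
  simp only [Set.mem_empty_iff_false, iff_false]
  intro h
  have : e ∈ steps [x] := pathEdges_iff_steps.1 h
  simp at this

end Stmt16

/-- if `u` and `v` are not 2-edge-connected then there is an edge `e`
contained in all paths from `u` to `v` or in all paths from `v` to `u`; moreover any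
such edge is a strong bridge of `G`. -/
theorem stmt16 {V : Type*} (E : Set (V × V)) (u v : V)
    (hSC : StronglyConnected E)
    (h : ¬ TwoEdgeConnected E u v) :
    (∃ e ∈ E, (∀ p, IsPath E u v p → [e.1, e.2] <:+: p) ∨
              (∀ p, IsPath E v u p → [e.1, e.2] <:+: p)) ∧
    (∀ e ∈ E, ((∀ p, IsPath E u v p → [e.1, e.2] <:+: p) ∨
               (∀ p, IsPath E v u p → [e.1, e.2] <:+: p)) →
      StrongBridge E e) := by
  classical
  by_cases huv : u = v
  · exfalso
    apply h
    subst huv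
    refine ⟨⟨[u], [u], Stmt16.isPath_singleton E u, Stmt16.isPath_singleton E u, ?_⟩,
      ⟨[u], [u], Stmt16.isPath_singleton E u, Stmt16.isPath_singleton E u, ?_⟩⟩ <;>
      rw [Stmt16.pathEdges_singleton] <;> simp
  constructor
  · by_contra hA
    push_neg at hA
    apply h
    constructor
    · exact Stmt16.menger2 E u v huv (hSC u v) (fun e he => (hA e he).1)
    · exact Stmt16.menger2 E v u (Ne.symm huv) (hSC v u) (fun e he => (hA e he).2)
  · intro e he hall
    refine ⟨he, fun hSC' => ?_⟩
    rcases hall with hall | hall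
    · obtain ⟨p, hp⟩ := hSC' u v
      have hp' : IsPath E u v p := Stmt16.isPath_mono Set.diff_subset hp
      have hinf := hall p hp'
      have hstep : (e.1, e.2) ∈ Stmt16.steps p := Stmt16.infix_pair_iff.1 hinf
      have : (e.1, e.2) ∈ E \ {e} := Stmt16.chain'_iff_steps.1 hp.1 _ hstep
      exact this.2 (by simp)
    · obtain ⟨p, hp⟩ := hSC' v u
      have hp' : IsPath E v u p := Stmt16.isPath_mono Set.diff_subset hp
      have hinf := hall p hp'
      have hstep : (e.1, e.2) ∈ Stmt16.steps p := Stmt16.infix_pair_iff.1 hinf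
      have : (e.1, e.2) ∈ E \ {e} := Stmt16.chain'_iff_steps.1 hp.1 _ hstep
      exact this.2 (by simp)
end
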